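/- A vector field of the form p(x) = a + b × x (a, b ∈ ℝ³) is uniquely determined on ℝ³ by the six values of the line integrals of its tangential components along the six edges of a non-degenerate tetrahedron: if all six edge integrals of p vanish, then p = 0. -/

import Mathlib

open scoped Matrix
/-- A vector field of the form `p(x) = a + b × x` is uniquely determined
by the line integrals of its tangential components along the six edges of a
non-degenerate tetrahedron: if all edge integrals `σ(p, e_{ij})` vanish, then `p = 0`
(i.e. `a = 0` and `b = 0`). -/
theorem nedelec_edge_dofs_unisolvent
    (v : Fin 4 → (Fin 3 → ℝ)) (hv : AffineIndependent ℝ v)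
    (a b : Fin 3 → ℝ)
    (p : (Fin 3 → ℝ) → (Fin 3 → ℝ)) (hp : ∀ x, p x = a + crossProduct b x)
    (hσ : ∀ i j : Fin 4, i ≠ j →
      (∫ t in (0:ℝ)..1, (p (v i + t • (v j - v i))) ⬝ᵥ (v j - v i)) = 0) :
    a = 0 ∧ b = 0 := by
  -- Step 1: each integrand is constant in `t`, so the integral equals the value at the
  -- left endpoint; this yields the scalar edge equations.
  have hE : ∀ i j : Fin 4, i ≠ j → (a + crossProduct b (v i)) ⬝ᵥ (v j - v i) = 0 := by
    intro i j hij
    have h := hσ i j hij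
    rw [intervalIntegral.integral_congr
      (g := fun _ => (a + crossProduct b (v i)) ⬝ᵥ (v j - v i)) ?_] at h
    · simpa using h
    · intro t _
      simp only [hp, map_add, map_smul]
      simp [add_dotProduct, smul_dotProduct, cross_apply, dotProduct, Matrix.vecHead, Matrix.vecTail,
        Fin.sum_univ_three, Pi.sub_apply, Pi.add_apply, Pi.smul_apply, smul_eq_mul]
      ring
  -- Step 2: the matrix of edge vectors from `v 0` is invertible.
  set U : Matrix (Fin 3) (Fin 3) ℝ := Matrix.of (fun i => v i.succ - v 0) with hUdef
  have hUli0 : LinearIndependent ℝ (fun i : Fin 3 => v i.succ - v 0) := by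
    have h0 := (affineIndependent_iff_linearIndependent_vsub ℝ v 0).mp hv
    have he : Function.Injective
        (fun i : Fin 3 => (⟨i.succ, Fin.succ_ne_zero i⟩ : {x : Fin 4 // x ≠ 0})) := by
      intro x y hxy
      simpa [Fin.succ_inj] using congrArg Subtype.val hxy
    have h1 := h0.comp _ he
    exact h1
  have hUli : LinearIndependent ℝ (fun i => U i) := hUli0
  have hUunit : IsUnit U := Matrix.linearIndependent_rows_iff_isUnit.mp hUli
  have hUdet : U.det ≠ 0 := by
    simpa [isUnit_iff_ne_zero] using (Matrix.isUnit_iff_isUnit_det U).mp hUunit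
  -- Step 3: the matrix of face normals is invertible (its determinant is `U.det ^ 2`).
  set M : Matrix (Fin 3) (Fin 3) ℝ :=
    Matrix.of ![(U 0) ⨯₃ (U 1), (U 0) ⨯₃ (U 2), (U 1) ⨯₃ (U 2)] with hMdef
  have hMdet : M.det = U.det ^ 2 := by
    simp [hMdef, hUdef, Matrix.det_fin_three, cross_apply]
    ring
  have hMunit : IsUnit M := by
    rw [Matrix.isUnit_iff_isUnit_det, isUnit_iff_ne_zero, hMdet]
    positivity
  have hs : (Fin.succ 2 : Fin 4) = 3 := rfl
  -- Step 4: summing the edge equations around each face kills `a` and shows that `b`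
  -- is orthogonal to all face normals, hence `b = 0`.
  have hMb : M.mulVec b = 0 := by
    funext k
    fin_cases k
    · have h1 := hE 0 1 (by decide)
      have h2 := hE 1 2 (by decide)
      have h3 := hE 2 0 (by decide)
      simp [cross_apply, dotProduct, Fin.sum_univ_three, Matrix.vecHead, Matrix.vecTail] at h1 h2 h3
      simp [hMdef, hUdef, Matrix.mulVec, cross_apply, dotProduct, Fin.sum_univ_three, hs, Matrix.vecHead, Matrix.vecTail]
      linear_combination h1 + h2 + h3
    · have h1 := hE 0 1 (by decide)
      have h2 := hE 1 3 (by decide)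
      have h3 := hE 3 0 (by decide)
      simp [cross_apply, dotProduct, Fin.sum_univ_three, Matrix.vecHead, Matrix.vecTail] at h1 h2 h3
      simp [hMdef, hUdef, Matrix.mulVec, cross_apply, dotProduct, Fin.sum_univ_three, hs, Matrix.vecHead, Matrix.vecTail]
      linear_combination h1 + h2 + h3
    · have h1 := hE 0 2 (by decide)
      have h2 := hE 2 3 (by decide)
      have h3 := hE 3 0 (by decide)
      simp [cross_apply, dotProduct, Fin.sum_univ_three, Matrix.vecHead, Matrix.vecTail] at h1 h2 h3
      simp [hMdef, hUdef, Matrix.mulVec, cross_apply, dotProduct, Fin.sum_univ_three, hs, Matrix.vecHead, Matrix.vecTail]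
      linear_combination h1 + h2 + h3
  have hb : b = 0 := by
    have := Matrix.mulVec_injective_iff_isUnit.mpr hMunit
    apply this
    simp [hMb]
  -- Step 5: with `b = 0`, the edge equations from `v 0` show `a` is orthogonal to the
  -- three edge directions, hence `a = 0`.
  have ha : a = 0 := by
    have hUa : U.mulVec a = 0 := by
      funext k
      have h1 := hE 0 k.succ (Ne.symm (Fin.succ_ne_zero k))
      rw [hb] at h1
      fin_cases k <;>
        simp [cross_apply, dotProduct, Fin.sum_univ_three, hs, Matrix.vecHead, Matrix.vecTail] at h1 <;>
        simp [hUdef, Matrix.mulVec, dotProduct, Fin.sum_univ_three, hs, Matrix.vecHead, Matrix.vecTail] <;>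
        linarith
    have := Matrix.mulVec_injective_iff_isUnit.mpr hUunit
    apply this
    simp [hUa]
  exact ⟨ha, hb⟩
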